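/- For the Herzog ideal 𝔭_n associated to n = (n1,n2,n3) with gcd(n1,n2,n3) = 1, the quotient A/(x1·A + 𝔭_n) is an Artinian ring of length n1. More generally, length(A/(x_i·A + 𝔭_n)) = n_i / gcd(n1,n2,n3) for each i. -/

import Mathlib

open MvPolynomial

/-- The Herzog ideal associated to `n ∈ ℕ^3`: the kernel of the `k`-algebra map
`k[x1,x2,x3] → k[t]` sending `xᵢ` to `t^{nᵢ}`. -/
noncomputable def herzogIdeal (k : Type*) [Field k] (n : Fin 3 → ℕ) :
    Ideal (MvPolynomial (Fin 3) k) :=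
  RingHom.ker (MvPolynomial.aeval (fun i => (Polynomial.X : Polynomial k) ^ n i)).toRingHom

/-- The length of a module: the Krull dimension of its lattice of submodules. -/
noncomputable def moduleLength (R M : Type*) [CommRing R] [AddCommGroup M]
    [Module R M] : WithBot ℕ∞ :=
  Order.krullDim (Submodule R M)

namespace Stmt14Aux

open Polynomial

variable {k : Type*} [Field k] (n : Fin 3 → ℕ)

/-- membership in the numerical semigroup generated by `n 0, n 1, n 2`. -/
def inS (s : ℕ) : Prop := ∃ c : Fin 3 → ℕ, ∑ j, c j * n j = s

lemma inS_zero : inS n 0 := ⟨0, by simp⟩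

lemma inS_add {s t : ℕ} (hs : inS n s) (ht : inS n t) : inS n (s + t) := by
  obtain ⟨c, rfl⟩ := hs; obtain ⟨e, rfl⟩ := ht
  exact ⟨c + e, by simp [add_mul, Finset.sum_add_distrib]⟩

lemma inS_gen (j : Fin 3) : inS n (n j) := by
  refine ⟨Pi.single j 1, ?_⟩
  simp [Pi.single_apply, Finset.sum_ite_eq']

lemma inS_mul (j : Fin 3) (t : ℕ) : inS n (n j * t) := by
  induction t with
  | zero => exact ⟨0, by simp⟩
  | succ t ih => rw [Nat.mul_succ]; exact inS_add n ih (inS_gen n j)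

lemma d_dvd_gen {d : ℕ} (hd : d = Nat.gcd (n 0) (Nat.gcd (n 1) (n 2))) (j : Fin 3) : d ∣ n j := by
  subst hd; fin_cases j
  · exact Nat.gcd_dvd_left _ _
  · exact (Nat.gcd_dvd_right _ _).trans (Nat.gcd_dvd_left _ _)
  · exact (Nat.gcd_dvd_right _ _).trans (Nat.gcd_dvd_right _ _)

lemma d_dvd {d : ℕ} (hd : d = Nat.gcd (n 0) (Nat.gcd (n 1) (n 2))) {s : ℕ} (hs : inS n s) :
    d ∣ s := by
  obtain ⟨c, rfl⟩ := hs
  exact Finset.dvd_sum fun j _ => Dvd.dvd.mul_left (d_dvd_gen n hd j) _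

lemma d_pos {d : ℕ} (hd : d = Nat.gcd (n 0) (Nat.gcd (n 1) (n 2))) (hpos : ∀ j, 0 < n j) :
    0 < d := by
  subst hd; exact Nat.gcd_pos_of_pos_left _ (hpos 0)

lemma gcd_div {d : ℕ} (hd : d = Nat.gcd (n 0) (Nat.gcd (n 1) (n 2))) (hpos : ∀ j, 0 < n j) :
    Nat.gcd (n 0 / d) (Nat.gcd (n 1 / d) (n 2 / d)) = 1 := by
  have h0 := d_dvd_gen n hd 0
  have h1 := d_dvd_gen n hd 1
  have h2 := d_dvd_gen n hd 2
  rw [Nat.gcd_div h1 h2, Nat.gcd_div h0 (hd ▸ Nat.gcd_dvd_right _ _), ← hd]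
  exact Nat.div_self (d_pos n hd hpos)

/-- reachability of every residue class mod `m = n i / d` by semigroup elements -/
lemma reach {d : ℕ} {m : ℕ} [NeZero m]
    (hgcd : Nat.gcd (n 0 / d) (Nat.gcd (n 1 / d) (n 2 / d)) = 1)
    (hdpos : 0 < d) (hdvd : ∀ j, d ∣ n j) (r : ZMod m) :
    ∃ s, inS n s ∧ ((s / d : ℕ) : ZMod m) = r := by
  set P : ZMod m → Prop := fun x => ∃ c : Fin 3 → ℕ, ((∑ j, c j * (n j / d) : ℕ) : ZMod m) = x
    with hP
  have Pgen : ∀ j : Fin 3, P ((n j / d : ℕ) : ZMod m) := by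
    intro j
    refine ⟨Pi.single j 1, ?_⟩
    congr 1
    simp [Pi.single_apply, Finset.sum_ite_eq']
  have Padd : ∀ {x y}, P x → P y → P (x + y) := by
    rintro x y ⟨c, rfl⟩ ⟨e, rfl⟩
    exact ⟨c + e, by push_cast [Pi.add_apply, add_mul, Finset.sum_add_distrib]; ring⟩
  have Pnsmul : ∀ (t : ℕ) {x}, P x → P (t • x) := by
    intro t
    induction t with
    | zero => intro x _; exact ⟨0, by simp⟩
    | succ t ih =>
      intro x hx
      have := Padd (ih hx) hx
      rwa [← succ_nsmul] at this
  have Pmul : ∀ (z : ZMod m) {x}, P x → P (z * x) := by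
    intro z x hx
    have hz : ((z.val : ℕ) : ZMod m) = z := by rw [ZMod.natCast_val, ZMod.cast_id]
    have := Pnsmul z.val hx
    rwa [nsmul_eq_mul, hz] at this
  set a := n 0 / d; set b := n 1 / d; set c := n 2 / d
  set g := Nat.gcd b c with hg
  have h1 : ((Nat.gcd a g : ℕ) : ℤ) = a * Nat.gcdA a g + g * Nat.gcdB a g :=
    Nat.gcd_eq_gcd_ab a g
  have h2 : ((g : ℕ) : ℤ) = b * Nat.gcdA b c + c * Nat.gcdB b c := Nat.gcd_eq_gcd_ab b c
  rw [hgcd] at h1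
  have key : (1 : ZMod m) =
      ((Nat.gcdA a g : ℤ) : ZMod m) * ((a : ℕ) : ZMod m) +
      (((Nat.gcdB a g * Nat.gcdA b c : ℤ)) : ZMod m) * ((b : ℕ) : ZMod m) +
      (((Nat.gcdB a g * Nat.gcdB b c : ℤ)) : ZMod m) * ((c : ℕ) : ZMod m) := by
    have h3 : (1 : ℤ) = a * Nat.gcdA a g + (b * Nat.gcdA b c + c * Nat.gcdB b c) * Nat.gcdB a g := by
      rw [← h2]; exact_mod_cast h1
    have := congrArg (fun z : ℤ => (z : ZMod m)) h3
    push_cast at this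
    push_cast
    linear_combination this
  have P1 : P 1 := by
    rw [key]
    exact Padd (Padd (Pmul _ (Pgen 0)) (Pmul _ (Pgen 1))) (Pmul _ (Pgen 2))
  have Pr : P r := by
    have := Pmul r P1
    rwa [mul_one] at this
  obtain ⟨cf, hcf⟩ := Pr
  refine ⟨∑ j, cf j * n j, ⟨cf, rfl⟩, ?_⟩
  have hsum : (∑ j, cf j * n j) = d * ∑ j, cf j * (n j / d) := by
    rw [Finset.mul_sum]
    refine Finset.sum_congr rfl fun j _ => ?_
    rw [← mul_assoc, mul_comm d (cf j), mul_assoc, Nat.mul_div_cancel' (hdvd j)]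
  rw [hsum, Nat.mul_div_cancel_left _ hdpos, hcf]

/-- the Apéry element of the residue class `r`. -/
noncomputable def aps (d : ℕ) {m : ℕ} (r : ZMod m) : ℕ :=
  sInf {s | inS n s ∧ ((s / d : ℕ) : ZMod m) = r}

section
variable {d m : ℕ} (i : Fin 3) [NeZero m]

lemma aps_mem (hne : ∀ r : ZMod m, ∃ s, inS n s ∧ ((s / d : ℕ) : ZMod m) = r) (r : ZMod m) :
    inS n (aps n d r) ∧ (((aps n d r) / d : ℕ) : ZMod m) = r :=
  Nat.sInf_mem (hne r)

lemma aps_min {s : ℕ} (hs : inS n s) {r : ZMod m} (hr : ((s / d : ℕ) : ZMod m) = r) :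
    aps n d r ≤ s := Nat.sInf_le ⟨hs, hr⟩

lemma res_step (hdpos : 0 < d) (hm : d * m = n i) {u s : ℕ} (hu : d ∣ u) (hs : u + n i = s) :
    ((s / d : ℕ) : ZMod m) = ((u / d : ℕ) : ZMod m) := by
  have h1 : s / d = u / d + m := by
    subst hs
    rw [← hm, Nat.add_mul_div_left _ _ hdpos]
  rw [h1]
  push_cast
  simp [ZMod.natCast_self]

lemma aps_not_step (hdpos : 0 < d) (hm : d * m = n i)
    (hne : ∀ r : ZMod m, ∃ s, inS n s ∧ ((s / d : ℕ) : ZMod m) = r)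
    (hdd : ∀ {s}, inS n s → d ∣ s) (r : ZMod m) :
    ¬ ∃ u, inS n u ∧ u + n i = aps n d r := by
  rintro ⟨u, hu, hs⟩
  have hru : ((u / d : ℕ) : ZMod m) = r := by
    rw [← (aps_mem n hne r).2, res_step n i hdpos hm (hdd hu) hs]
  have := aps_min n hu hru
  have hni : 0 < n i := by
    rw [← hm]; exact Nat.mul_pos hdpos (Nat.pos_of_ne_zero (NeZero.ne m))
  omega

lemma aps_complete (hdpos : 0 < d) (hm : d * m = n i)
    (hne : ∀ r : ZMod m, ∃ s, inS n s ∧ ((s / d : ℕ) : ZMod m) = r)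
    (hdd : ∀ {s}, inS n s → d ∣ s) {s : ℕ} (hs : inS n s)
    (hstep : ¬ ∃ u, inS n u ∧ u + n i = s) :
    s = aps n d (((s / d : ℕ) : ZMod m)) := by
  set r : ZMod m := ((s / d : ℕ) : ZMod m) with hr
  set a := aps n d r with ha
  have hmem := aps_mem n hne r
  have hle : a ≤ s := aps_min n hs rfl
  have hda : d ∣ a := hdd hmem.1
  have hds : d ∣ s := hdd hs
  have hcast : ((s / d - a / d : ℕ) : ZMod m) = 0 := by
    rw [Nat.cast_sub (Nat.div_le_div_right hle), hmem.2, hr, sub_self]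
  have hdvdm : m ∣ s / d - a / d := (ZMod.natCast_eq_zero_iff _ _).mp hcast
  obtain ⟨lam, hlam⟩ := hdvdm
  have hle2 : a / d ≤ s / d := Nat.div_le_div_right hle
  have hsa : s = a + n i * lam := by
    have h1 : s / d = a / d + m * lam := by omega
    have h2 : d * (s / d) = s := Nat.mul_div_cancel' hds
    have h3 : d * (a / d) = a := Nat.mul_div_cancel' hda
    calc s = d * (s / d) := h2.symm
    _ = d * (a / d) + (d * m) * lam := by rw [h1]; ring
    _ = a + n i * lam := by rw [h3, hm]
  rcases Nat.eq_zero_or_pos lam with h | h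
  · rw [h, Nat.mul_zero, Nat.add_zero] at hsa; exact hsa
  · exfalso
    apply hstep
    obtain ⟨t, rfl⟩ : ∃ t, lam = t + 1 := ⟨lam - 1, by omega⟩
    refine ⟨a + n i * t, ?_, by rw [hsa, Nat.mul_succ]; ring⟩
    exact inS_add n hmem.1 (inS_mul n i t)
end

end Stmt14Aux

namespace Stmt14Aux

open Polynomial

variable {k : Type*} [Field k] (n : Fin 3 → ℕ)

/-- the semigroup map -/
noncomputable def sgm (k : Type*) [Field k] (n : Fin 3 → ℕ) :
    MvPolynomial (Fin 3) k →ₐ[k] Polynomial k :=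
  MvPolynomial.aeval (fun j => (Polynomial.X : Polynomial k) ^ n j)

lemma coeff_sgm_eq_zero (P : MvPolynomial (Fin 3) k) {a : ℕ} (ha : ¬ inS n a) :
    (sgm k n P).coeff a = 0 := by
  induction P using MvPolynomial.induction_on generalizing a with
  | C c =>
    rw [show (sgm k n) (C c) = Polynomial.C c by simp [sgm]]
    rw [Polynomial.coeff_C, if_neg]
    rintro rfl; exact ha ⟨0, by simp⟩
  | add P Q ihP ihQ => rw [map_add, Polynomial.coeff_add, ihP ha, ihQ ha, add_zero]
  | mul_X P j ih =>
    rw [show (sgm k n) (P * X j) = sgm k n P * Polynomial.X ^ n j by simp [sgm]]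
    rw [Polynomial.coeff_mul_X_pow']
    split_ifs with h
    · refine ih fun hin => ha ?_
      have := inS_add n hin (inS_gen n j)
      rwa [Nat.sub_add_cancel h] at this
    · rfl

/-- a monomial with exponent vector `c` -/
noncomputable def monom (k : Type*) [Field k] (c : Fin 3 → ℕ) : MvPolynomial (Fin 3) k :=
  MvPolynomial.monomial (Finsupp.equivFunOnFinite.symm c) 1

lemma sgm_monomial (c : Fin 3 → ℕ) :
    sgm k n (monom k c) = Polynomial.X ^ (∑ j, c j * n j) := by
  rw [monom, sgm, MvPolynomial.aeval_monomial, map_one, one_mul]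
  rw [Finsupp.prod_fintype _ _ (fun j => by simp)]
  simp only [Finsupp.coe_equivFunOnFinite_symm, ← pow_mul]
  rw [Finset.prod_pow_eq_pow_sum]
  congr 1
  exact Finset.sum_congr rfl fun j _ => mul_comm _ _

lemma mem_range_of_support (g : Polynomial k) (hg : ∀ a ∈ g.support, inS n a) :
    ∃ Q, sgm k n Q = g := by
  refine ⟨∑ a ∈ g.support.attach, MvPolynomial.C (g.coeff a) *
    monom k (Classical.choose (hg a a.2)), ?_⟩
  rw [map_sum]
  conv_rhs => rw [g.as_sum_support]
  rw [← Finset.sum_attach g.support (fun a => Polynomial.monomial a (g.coeff a))]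
  refine Finset.sum_congr rfl fun a _ => ?_
  rw [map_mul, sgm_monomial, Classical.choose_spec (hg a a.2)]
  simp [sgm, Polynomial.C_mul_X_pow_eq_monomial]

/-- bundled hypotheses -/
structure Good (n : Fin 3 → ℕ) (d m : ℕ) (i : Fin 3) : Prop where
  hpos : ∀ j, 0 < n j
  hdpos : 0 < d
  hmpos : 0 < m
  hm : d * m = n i
  hdd : ∀ {s}, inS n s → d ∣ s
  hmem : ∀ r : ZMod m, inS n (aps n d r) ∧ (((aps n d r) / d : ℕ) : ZMod m) = r
  hstep : ∀ r : ZMod m, ¬ ∃ u, inS n u ∧ u + n i = aps n d r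
  hcomp : ∀ {s : ℕ}, inS n s → (¬ ∃ u, inS n u ∧ u + n i = s) →
    s = aps n d (((s / d : ℕ) : ZMod m))
  hmin : ∀ {s : ℕ} (_ : inS n s) {r : ZMod m}, ((s / d : ℕ) : ZMod m) = r → aps n d r ≤ s

lemma mkGood {d : ℕ} (hd : d = Nat.gcd (n 0) (Nat.gcd (n 1) (n 2))) (hpos : ∀ j, 0 < n j)
    (i : Fin 3) : Good n d (n i / d) i := by
  have hdpos := d_pos n hd hpos
  have hdvd := d_dvd_gen n hd
  have hm : d * (n i / d) = n i := Nat.mul_div_cancel' (hdvd i)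
  have hmpos : 0 < n i / d := Nat.div_pos (Nat.le_of_dvd (hpos i) (hdvd i)) hdpos
  haveI : NeZero (n i / d) := ⟨hmpos.ne'⟩
  have hne := reach n (gcd_div n hd hpos) hdpos hdvd (m := n i / d)
  have hdd : ∀ {s}, inS n s → d ∣ s := fun hs => d_dvd n hd hs
  exact ⟨hpos, hdpos, hmpos, hm, hdd, aps_mem n hne,
    aps_not_step n i hdpos hm hne hdd, fun hs h => aps_complete n i hdpos hm hne hdd hs h,
    fun {s} hs {r} hr => aps_min n hs hr⟩

/-- the coefficient-extraction linear map -/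
noncomputable def Phi (k : Type*) [Field k] (n : Fin 3 → ℕ) (d m : ℕ) :
    MvPolynomial (Fin 3) k →ₗ[k] (ZMod m → k) where
  toFun P := fun r => (sgm k n P).coeff (aps n d r)
  map_add' P Q := by funext r; simp
  map_smul' c P := by
    funext r
    simp only [map_smul, RingHom.id_apply, Pi.smul_apply, smul_eq_mul]
    rw [Polynomial.coeff_smul, smul_eq_mul]

variable {d m : ℕ} {i : Fin 3}

lemma aps_inj (H : Good n d m i) : Function.Injective (aps n d : ZMod m → ℕ) := by
  intro r r' h
  rw [← (H.hmem r).2, ← (H.hmem r').2, h]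

lemma Phi_surjective (H : Good n d m i) : Function.Surjective (Phi k n d m) := by
  haveI : NeZero m := ⟨H.hmpos.ne'⟩
  have hsingle : ∀ r₀ : ZMod m, ∃ P, Phi k n d m P = Pi.single r₀ (1 : k) := by
    intro r₀
    obtain ⟨c, hc⟩ := (H.hmem r₀).1
    refine ⟨monom k c, funext fun r => ?_⟩
    rw [show Phi k n d m (monom k c) r = (sgm k n (monom k c)).coeff (aps n d r) from rfl,
      sgm_monomial, hc, Polynomial.coeff_X_pow, Pi.single_apply]
    congr 1
    simp only [eq_iff_iff]
    constructor
    · intro h; exact aps_inj n H h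
    · rintro rfl; rfl
  intro f
  choose P hP using hsingle
  refine ⟨∑ r : ZMod m, f r • P r, ?_⟩
  rw [map_sum]
  simp_rw [map_smul, hP]
  funext r'
  simp [Pi.single_apply, Finset.sum_ite_eq']

lemma sgm_X (j : Fin 3) : sgm k n (X j) = Polynomial.X ^ n j := by simp [sgm]

/-- the full ideal -/
noncomputable def hI (k : Type*) [Field k] (n : Fin 3 → ℕ) (i : Fin 3) :
    Ideal (MvPolynomial (Fin 3) k) :=
  Ideal.span {(X i : MvPolynomial (Fin 3) k)} ⊔ RingHom.ker (sgm k n).toRingHom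

lemma coeff_nonzero_decomp (H : Good n d m i) {P : MvPolynomial (Fin 3) k}
    (hP : ∀ r : ZMod m, (sgm k n P).coeff (aps n d r) = 0)
    {a : ℕ} (hc : (sgm k n P).coeff a ≠ 0) : ∃ u, inS n u ∧ u + n i = a := by
  have haS : inS n a := by
    by_contra h
    exact hc (coeff_sgm_eq_zero n P h)
  by_contra h
  have := H.hcomp haS h
  rw [this] at hc
  exact hc (hP _)

lemma ker_Phi (H : Good n d m i) :
    LinearMap.ker (Phi k n d m) = (hI k n i).restrictScalars k := by
  ext P
  simp only [LinearMap.mem_ker, Submodule.restrictScalars_mem]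
  constructor
  · intro hP
    have hP' : ∀ r : ZMod m, (sgm k n P).coeff (aps n d r) = 0 := fun r => congrFun hP r
    have hdvd : Polynomial.X ^ n i ∣ sgm k n P := by
      rw [Polynomial.X_pow_dvd_iff]
      intro b hb
      by_contra hc
      obtain ⟨u, _, hu2⟩ := coeff_nonzero_decomp n H hP' hc
      omega
    obtain ⟨g, hg⟩ := hdvd
    have hgS : ∀ b ∈ g.support, inS n b := by
      intro b hb
      have hco : (sgm k n P).coeff (b + n i) ≠ 0 := by
        rw [hg, Polynomial.coeff_X_pow_mul]
        exact Polynomial.mem_support_iff.mp hb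
      obtain ⟨u, hu1, hu2⟩ := coeff_nonzero_decomp n H hP' hco
      have : u = b := by omega
      rwa [← this]
    obtain ⟨Q, hQ⟩ := mem_range_of_support n g hgS
    rw [hI]
    refine Submodule.mem_sup.mpr ⟨Q * X i, ?_, P - Q * X i, ?_, by ring⟩
    · exact Ideal.mem_span_singleton'.mpr ⟨Q, rfl⟩
    · rw [RingHom.mem_ker]
      have : (sgm k n).toRingHom (P - Q * X i) = sgm k n P - sgm k n Q * (Polynomial.X ^ n i) := by
        simp [sgm_X]
      rw [this, hQ, hg]
      ring
  · intro hP
    obtain ⟨P₁, h1, P₂, h2, rfl⟩ := Submodule.mem_sup.mp hP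
    obtain ⟨Q, rfl⟩ := Ideal.mem_span_singleton'.mp h1
    rw [map_add]
    have e2 : Phi k n d m P₂ = 0 := by
      funext r
      show (sgm k n P₂).coeff _ = 0
      rw [show sgm k n P₂ = 0 from h2, Polynomial.coeff_zero]
    have e1 : Phi k n d m (Q * X i) = 0 := by
      funext r
      show (sgm k n (Q * X i)).coeff (aps n d r) = 0
      rw [map_mul, sgm_X, Polynomial.coeff_mul_X_pow']
      split_ifs with h
      · by_contra hc
        have hu : inS n (aps n d r - n i) := by
          by_contra h'
          exact hc (coeff_sgm_eq_zero n Q h')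
        exact H.hstep r ⟨aps n d r - n i, hu, by omega⟩
      · rfl
    rw [e1, e2, add_zero]

end Stmt14Aux

namespace Stmt14Aux

open Polynomial

variable {k : Type*} [Field k] (n : Fin 3 → ℕ) {d m : ℕ} {i : Fin 3}

/-- filtration ideals: polynomials whose image has vanishing coefficients at all
Apéry elements below the threshold `c`. -/
noncomputable def Jc (H : Good n d m i) (c : ℕ) : Ideal (MvPolynomial (Fin 3) k) where
  carrier := {P | ∀ r : ZMod m, aps n d r < c → (sgm k n P).coeff (aps n d r) = 0}
  zero_mem' := fun r _ => by simp
  add_mem' := by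
    intro P Q hP hQ r hr
    rw [map_add, Polynomial.coeff_add, hP r hr, hQ r hr, add_zero]
  smul_mem' := by
    intro a P hP r hr
    rw [smul_eq_mul, map_mul, Polynomial.coeff_mul]
    refine Finset.sum_eq_zero fun x hx => ?_
    have hxa : x.1 + x.2 = aps n d r := Finset.HasAntidiagonal.mem_antidiagonal.mp hx
    rcases eq_or_ne ((sgm k n a).coeff x.1) 0 with h0 | h0
    · rw [h0, zero_mul]
    have hx1S : inS n x.1 := by
      by_contra h
      exact h0 (coeff_sgm_eq_zero n a h)
    rcases eq_or_ne x.1 0 with h1 | h1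
    · have : x.2 = aps n d r := by omega
      rw [this, hP r hr, mul_zero]
    · -- x.2 is a smaller Apéry element
      rcases eq_or_ne ((sgm k n P).coeff x.2) 0 with h2 | h2
      · rw [h2, mul_zero]
      exfalso
      have hx2S : inS n x.2 := by
        by_contra h
        exact h2 (coeff_sgm_eq_zero n P h)
      have hnd : ¬ ∃ u, inS n u ∧ u + n i = x.2 := by
        rintro ⟨u, hu1, hu2⟩
        exact H.hstep r ⟨u + x.1, inS_add n hu1 hx1S, by omega⟩
      have hx2 := H.hcomp hx2S hnd
      have hlt : aps n d (((x.2 / d : ℕ) : ZMod m)) < c := by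
        rw [← hx2]; omega
      have := hP _ hlt
      rw [← hx2] at this
      exact h2 this

lemma Jc_antitone (H : Good n d m i) {c c' : ℕ} (h : c ≤ c') :
    (Jc n H c' : Ideal (MvPolynomial (Fin 3) k)) ≤ Jc n H c := by
  intro P hP r hr
  exact hP r (lt_of_lt_of_le hr h)

lemma hI_le_Jc (H : Good n d m i) (c : ℕ) :
    (hI k n i : Ideal (MvPolynomial (Fin 3) k)) ≤ Jc n H c := by
  intro P hP
  have : P ∈ (hI k n i).restrictScalars k := hP
  rw [← ker_Phi n H] at this
  intro r _
  exact congrFun (LinearMap.mem_ker.mp this) r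

lemma monom_mem_Jc (H : Good n d m i) {a : ℕ} {cf : Fin 3 → ℕ} (hcf : ∑ j, cf j * n j = a)
    {c : ℕ} (hc : ∀ r : ZMod m, aps n d r < c → aps n d r ≠ a) :
    (monom k cf : MvPolynomial (Fin 3) k) ∈ Jc n H c := by
  intro r hr
  rw [sgm_monomial, hcf, Polynomial.coeff_X_pow, if_neg]
  exact fun h => hc r hr h

lemma monom_not_mem_Jc (H : Good n d m i) {a : ℕ} {cf : Fin 3 → ℕ} (hcf : ∑ j, cf j * n j = a)
    {c : ℕ} (r₀ : ZMod m) (hr₀ : aps n d r₀ = a) (hlt : a < c) :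
    (monom k cf : MvPolynomial (Fin 3) k) ∉ Jc n H c := by
  intro hmem
  have := hmem r₀ (by omega)
  rw [sgm_monomial, hcf, hr₀, Polynomial.coeff_X_pow, if_pos rfl] at this
  exact one_ne_zero this

end Stmt14Aux

namespace Stmt14Aux

open Polynomial

variable {k : Type*} [Field k] (n : Fin 3 → ℕ) {d m : ℕ} {i : Fin 3}

/-- threshold function for the filtration -/
def thr {m : ℕ} (E : Fin m → ℕ) (j : Fin (m + 1)) : ℕ :=
  if hj : (j : ℕ) = 0 then 0 else E ⟨(j : ℕ) - 1, by omega⟩ + 1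

lemma thr_succ {m : ℕ} (E : Fin m → ℕ) (j : Fin m) : thr E j.succ = E j + 1 := by
  rw [thr, dif_neg (by simp [Fin.val_succ])]
  congr 1

lemma thr_castSucc_le {m : ℕ} (E : Fin m → ℕ) (hE : StrictMono E) (j : Fin m) :
    thr E j.castSucc ≤ E j := by
  unfold thr
  split_ifs with h
  · omega
  · have : ((j.castSucc : ℕ) : ℕ) = (j : ℕ) := rfl
    have hlt : E ⟨(j.castSucc : ℕ) - 1, by omega⟩ < E j := by
      apply hE
      simp only [Fin.mk_lt_mk, Fin.lt_def]
      simp only [Fin.coe_castSucc] at h ⊢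
      omega
    omega

set_option maxHeartbeats 1000000 in
set_option synthInstance.maxHeartbeats 100000 in
lemma main (H : Good n d m i) :
    IsArtinianRing (MvPolynomial (Fin 3) k ⧸ hI k n i) ∧
    Order.krullDim
      (Submodule (MvPolynomial (Fin 3) k) (MvPolynomial (Fin 3) k ⧸ hI k n i)) =
      (m : WithBot ℕ∞) := by
  classical
  haveI : NeZero m := ⟨H.hmpos.ne'⟩
  -- the k-linear equivalence B ≃ (ZMod m → k)
  let e₁ : (MvPolynomial (Fin 3) k ⧸ (hI k n i).restrictScalars k) ≃ₗ[k] (ZMod m → k) :=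
    (Submodule.quotEquivOfEq _ _ (ker_Phi n H).symm).trans
      ((Phi k n d m).quotKerEquivOfSurjective (Phi_surjective n H))
  let e : (MvPolynomial (Fin 3) k ⧸ hI k n i) ≃ₗ[k] (ZMod m → k) :=
    (Submodule.Quotient.restrictScalarsEquiv k (hI k n i)).symm.trans e₁
  haveI hfd : FiniteDimensional k (MvPolynomial (Fin 3) k ⧸ hI k n i) := e.symm.finiteDimensional
  have hfr : Module.finrank k (MvPolynomial (Fin 3) k ⧸ hI k n i) = m := by
    rw [e.finrank_eq, Module.finrank_pi, ZMod.card]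
  constructor
  · -- Artinian
    haveI h1 : IsArtinian k (MvPolynomial (Fin 3) k ⧸ hI k n i) := inferInstance
    exact isArtinian_of_tower k h1
  · -- Krull dimension
    have hub : Order.krullDim
        (Submodule (MvPolynomial (Fin 3) k) (MvPolynomial (Fin 3) k ⧸ hI k n i)) ≤
        (m : WithBot ℕ∞) := by
      show (⨆ (p : LTSeries (Submodule (MvPolynomial (Fin 3) k)
        (MvPolynomial (Fin 3) k ⧸ hI k n i))), (p.length : WithBot ℕ∞)) ≤ (m : WithBot ℕ∞)
      refine iSup_le fun q => ?_
      have hq : q.length ≤ m := by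
        have hf : StrictMono (fun N0 : Submodule (MvPolynomial (Fin 3) k)
            (MvPolynomial (Fin 3) k ⧸ hI k n i) =>
            Module.finrank k (Submodule.restrictScalars k N0)) := by
          intro N1 N2 hlt
          refine Submodule.finrank_lt_finrank_of_lt (lt_of_le_of_ne ?_ ?_)
          · intro x hx; exact hlt.le hx
          · intro heq
            exact hlt.ne (Submodule.restrictScalars_injective k _ _ heq)
        let q' := q.map _ hf
        have h1 : q'.head + q'.length ≤ q'.last := LTSeries.head_add_length_le_nat q'
        have h2 : q'.last ≤ m := by
          have h4 : q'.last = Module.finrank k (Submodule.restrictScalars k q.last) := rfl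
          rw [h4, ← hfr]
          exact Submodule.finrank_le _
        have h3 : q'.length = q.length := rfl
        omega
      exact_mod_cast hq
    refine le_antisymm hub ?_
    -- lower bound : explicit chain
    have hTcard : (Finset.image (fun r : ZMod m => aps n d r) Finset.univ).card = m := by
      rw [Finset.card_image_of_injective _ (aps_inj n H), Finset.card_univ, ZMod.card]
    set L := (Finset.image (fun r : ZMod m => aps n d r) Finset.univ).sort (· ≤ ·) with hL
    have hLlen : L.length = m := by rw [hL, Finset.length_sort, hTcard]
    have hLsorted : List.Pairwise (· < ·) L := (Finset.sortedLT_sort _).pairwise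
    set E : Fin m → ℕ := fun j => L.get (Fin.cast hLlen.symm j) with hE
    have hEmono : StrictMono E := by
      intro a b hab
      exact hLsorted.rel_get_of_lt hab
    have hEap : ∀ j : Fin m, ∃ r : ZMod m, aps n d r = E j := by
      intro j
      have hmem : E j ∈ Finset.image (fun r : ZMod m => aps n d r) Finset.univ := by
        rw [← Finset.mem_sort (α := ℕ) (· ≤ ·), ← hL]
        show L.get _ ∈ L
        rw [List.get_eq_getElem]
        exact List.getElem_mem _
      obtain ⟨r, _, hr⟩ := Finset.mem_image.mp hmem
      exact ⟨r, hr⟩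
    set N : Fin (m + 1) → Submodule (MvPolynomial (Fin 3) k)
        (MvPolynomial (Fin 3) k ⧸ hI k n i) := fun j =>
      Submodule.map (hI k n i).mkQ (Jc n H (thr E j)) with hN
    have hstep : ∀ j : Fin m, N j.succ < N j.castSucc := by
      intro j
      obtain ⟨r₀, hr₀⟩ := hEap j
      have hinS : inS n (E j) := hr₀ ▸ (H.hmem r₀).1
      obtain ⟨cf, hcf⟩ := hinS
      have hmem : ((hI k n i).mkQ (monom k cf)) ∈ N j.castSucc := by
        refine Submodule.mem_map_of_mem ?_
        refine monom_mem_Jc n H hcf ?_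
        intro r hr
        have := thr_castSucc_le E hEmono j
        omega
      have hnot : ((hI k n i).mkQ (monom k cf)) ∉ N j.succ := by
        rintro ⟨Q, hQmem, hQeq⟩
        have hsub : Q - monom k cf ∈ hI k n i := by
          rw [← Submodule.Quotient.eq]
          exact hQeq
        have hPmem : (monom k cf : MvPolynomial (Fin 3) k) ∈ Jc n H (thr E j.succ) := by
          have h' := Submodule.sub_mem _ hQmem (hI_le_Jc n H _ hsub)
          rwa [sub_sub_cancel] at h'
        refine monom_not_mem_Jc n H hcf r₀ hr₀ ?_ hPmem
        rw [thr_succ]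
        omega
      have hle : N j.succ ≤ N j.castSucc := by
        apply Submodule.map_mono
        apply Jc_antitone
        rw [thr_succ]
        have := thr_castSucc_le E hEmono j
        omega
      exact hle.lt_of_ne fun heq => hnot (heq ▸ hmem)
    let p : LTSeries (Submodule (MvPolynomial (Fin 3) k)
        (MvPolynomial (Fin 3) k ⧸ hI k n i)) :=
      ⟨m, fun j => N j.rev, by
        intro j
        have h1 : (j.castSucc).rev = j.rev.succ := by
          ext
          simp only [Fin.val_rev, Fin.coe_castSucc, Fin.val_succ]
          omega
        have h2 : (j.succ).rev = j.rev.castSucc := by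
          ext
          simp only [Fin.val_rev, Fin.coe_castSucc, Fin.val_succ]
          omega
        show N ((j.castSucc).rev) < N ((j.succ).rev)
        rw [h1, h2]
        exact hstep j.rev⟩
    have hlow := Order.LTSeries.length_le_krullDim p
    exact_mod_cast hlow

end Stmt14Aux

/-- The quotient `A/(xᵢ·A + 𝔭_n)` is an Artinian ring of length
`nᵢ / gcd(n1,n2,n3)`; in particular, when `gcd(n1,n2,n3) = 1`, the length of
`A/(x1·A + 𝔭_n)` is `n1`. -/
theorem stmt_14 {k : Type*} [Field k] (n : Fin 3 → ℕ) (hpos : ∀ i, 0 < n i)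
    (d : ℕ) (hd : d = Nat.gcd (n 0) (Nat.gcd (n 1) (n 2))) :
    ∀ i : Fin 3,
      IsArtinianRing (MvPolynomial (Fin 3) k ⧸
        (Ideal.span {(X i : MvPolynomial (Fin 3) k)} ⊔ herzogIdeal k n)) ∧
      moduleLength (MvPolynomial (Fin 3) k)
        (MvPolynomial (Fin 3) k ⧸
          (Ideal.span {(X i : MvPolynomial (Fin 3) k)} ⊔ herzogIdeal k n)) =
        ((n i / d : ℕ) : WithBot ℕ∞) := by
  intro i
  have H := Stmt14Aux.mkGood n hd hpos i
  have h := Stmt14Aux.main (k := k) n H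
  have hid : Ideal.span {(X i : MvPolynomial (Fin 3) k)} ⊔ herzogIdeal k n =
      Stmt14Aux.hI k n i := rfl
  rw [hid]
  exact ⟨h.1, h.2⟩
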